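/- arXiv:2404.06720 — 2 statements merged into one kernel-verified Lean document; each statement's English description precedes it below -/
import Mathlib

section
/- Let $\delta\in(0,1]$, $s\ge 2$, and let $\mathbf{y}_1,\ldots,\mathbf{y}_r\in\mathbb{R}^d$ ($r\le d$) be unit-norm vectors with $\|P_{\mathrm{Span}(\mathbf{y}_j,j<i)^\perp}(\mathbf{y}_i)\|\ge\delta$ for all $i\le r$. Then there exist $\lceil r/s\rceil$ orthonormal vectors $\mathbf{z}_1,\ldots,\mathbf{z}_{\lceil r/s\rceil}\in\mathbb{R}^d$ such that for every $\mathbf{a}\in\mathbb{R}^d$ and every $i$, $|\mathbf{z}_i^\top\mathbf{a}| \le (\sqrt r/\delta)^{s/(s-1)}\max_{j\le r}|\mathbf{y}_j^\top\mathbf{a}|$. -/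
open Matrix
open scoped RealInnerProductSpace
open InnerProductSpace

set_option maxHeartbeats 1000000
set_option synthInstance.maxHeartbeats 400000

instance auxWFLT (r : ℕ) : WellFoundedLT (Fin r) := Finite.to_wellFoundedLT

section Aux

variable {E : Type*} [NormedAddCommGroup E] [InnerProductSpace ℝ E]

lemma aux_mem_orthogonal_span (S : Set E) (v : E) (h : ∀ u ∈ S, ⟪v, u⟫ = 0) :
    v ∈ (Submodule.span ℝ S)ᗮ := by
  rw [Submodule.mem_orthogonal']
  intro u hu
  induction hu using Submodule.span_induction with
  | mem x hx => exact h x hx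
  | zero => simp
  | add x y _ _ hx hy => rw [inner_add_right, hx, hy, add_zero]
  | smul c x _ hx => rw [inner_smul_right, hx, mul_zero]

lemma aux_parseval {n : ℕ} (e : Fin n → E) (he : Orthonormal ℝ e)
    (x : E) (hx : x ∈ Submodule.span ℝ (Set.range e)) :
    x = ∑ i, ⟪e i, x⟫ • e i := by
  obtain ⟨c, hc⟩ := (Submodule.mem_span_range_iff_exists_fun ℝ).1 hx
  have h1 : ∀ i, ⟪e i, x⟫ = c i := by
    intro i
    rw [← hc]
    exact he.inner_right_fintype c i
  conv_lhs => rw [← hc]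
  exact Finset.sum_congr rfl fun i _ => by rw [h1 i]

lemma aux_gs_eq_proj [FiniteDimensional ℝ E] {r : ℕ} (y : Fin r → E) (i : Fin r) :
    (Submodule.orthogonalProjection (Submodule.span ℝ (y '' Set.Iio i))ᗮ (y i) : E) = gramSchmidt ℝ y i := by
  have hKg : Submodule.span ℝ (y '' Set.Iio i)
      = Submodule.span ℝ (gramSchmidt ℝ y '' Set.Iio i) := (span_gramSchmidt_Iio ℝ y i).symm
  have h1 : gramSchmidt ℝ y i ∈ (Submodule.span ℝ (y '' Set.Iio i))ᗮ := by
    rw [hKg]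
    apply aux_mem_orthogonal_span
    rintro u ⟨j, hj, rfl⟩
    exact gramSchmidt_orthogonal ℝ y (ne_of_gt hj)
  have h2 : y i - gramSchmidt ℝ y i ∈ Submodule.span ℝ (y '' Set.Iio i) := by
    have hsub : y i - gramSchmidt ℝ y i
        = ∑ j ∈ Finset.Iio i, (ℝ ∙ gramSchmidt ℝ y j).starProjection (y i) := by
      rw [gramSchmidt_def ℝ y i, sub_sub_cancel]
    rw [hsub, hKg]
    apply Submodule.sum_mem
    intro j hj
    have hsub2 : ({gramSchmidt ℝ y j} : Set E) ⊆ gramSchmidt ℝ y '' Set.Iio i :=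
      Set.singleton_subset_iff.2 ⟨j, Finset.mem_Iio.1 hj, rfl⟩
    exact Submodule.span_mono hsub2 (Submodule.starProjection_apply_mem _ _)
  have hdecomp : y i = (y i - gramSchmidt ℝ y i) + gramSchmidt ℝ y i := by abel
  conv_lhs => rw [hdecomp]
  rw [map_add, Submodule.coe_add,
    Submodule.orthogonalProjectionOnto_orthogonal_apply_eq_zero h2,
    ← Submodule.starProjection_apply, Submodule.starProjection_eq_self_iff.2 h1]
  simp

end Aux

/-- Under the robust-independence hypothesis there exist `⌈r/s⌉` orthonormal
vectors `z i` such that `|⟪z i, a⟫| ≤ (√r/δ)^{s/(s-1)} · max_j |⟪y j, a⟫|` for all `a`. -/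
theorem orthonormal_from_robustly_independent
    (d r : ℕ) (hr : 0 < r) (hrd : r ≤ d) (δ : ℝ) (hδ0 : 0 < δ) (hδ1 : δ ≤ 1)
    (s : ℝ) (hs : 2 ≤ s)
    (y : Fin r → EuclideanSpace ℝ (Fin d))
    (hunit : ∀ i, ‖y i‖ = 1)
    (hrobust : ∀ i : Fin r,
      δ ≤ ‖(Submodule.orthogonalProjection (Submodule.span ℝ (y '' {j | j < i}))ᗮ
            (y i) : EuclideanSpace ℝ (Fin d))‖) :
    ∃ z : Fin ⌈(r : ℝ) / s⌉₊ → EuclideanSpace ℝ (Fin d),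
      Orthonormal ℝ z ∧
      ∀ (a : EuclideanSpace ℝ (Fin d)) (i : Fin ⌈(r : ℝ) / s⌉₊),
        |⟪z i, a⟫| ≤ (Real.sqrt r / δ) ^ (s / (s - 1)) *
          (Finset.univ.sup' (Finset.univ_nonempty_iff.mpr (Fin.pos_iff_nonempty.mp hr)) fun j => |⟪y j, a⟫|) := by
  classical
  have hs1 : (1:ℝ) < s := by linarith
  have hs0 : (0:ℝ) < s - 1 := by linarith
  have hrpos : (0:ℝ) < r := by exact_mod_cast hr
  set k := ⌈(r : ℝ) / s⌉₊ with hkdef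
  have hk1 : 1 ≤ k := Nat.one_le_ceil_iff.2 (div_pos hrpos (by linarith))
  have hkr : k ≤ r := Nat.ceil_le.2 (by
    exact_mod_cast div_le_self hrpos.le (by linarith))
  have hkey : s * ((k:ℝ) - 1) ≤ r := by
    have h1 : (k:ℝ) < (r:ℝ)/s + 1 := Nat.ceil_lt_add_one (by positivity)
    have h2 : s * ((k:ℝ) - 1) < s * ((r:ℝ)/s) :=
      mul_lt_mul_of_pos_left (by linarith) (by linarith)
    rw [mul_div_cancel₀ _ (by linarith : s ≠ 0)] at h2
    linarith
  -- Gram–Schmidt vectors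
  set g : Fin r → EuclideanSpace ℝ (Fin d) := gramSchmidt ℝ y with hgdef
  have hgδ : ∀ i, δ ≤ ‖g i‖ := by
    intro i
    have h := hrobust i
    have heq : (Submodule.orthogonalProjection (Submodule.span ℝ (y '' {j | j < i}))ᗮ
        (y i) : EuclideanSpace ℝ (Fin d)) = g i := aux_gs_eq_proj y i
    rwa [heq] at h
  have hgpos : ∀ i, 0 < ‖g i‖ := fun i => lt_of_lt_of_le hδ0 (hgδ i)
  set e : Fin r → EuclideanSpace ℝ (Fin d) := fun i => (‖g i‖)⁻¹ • g i with hedef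
  have he_orth : Orthonormal ℝ e := by
    rw [orthonormal_iff_ite]
    intro i j
    simp only [hedef, real_inner_smul_left, real_inner_smul_right]
    by_cases h : i = j
    · subst h
      rw [if_pos rfl, real_inner_self_eq_norm_sq, pow_two]
      field_simp
      exact div_self (hgpos i).ne'
    · rw [if_neg h, gramSchmidt_orthogonal ℝ y h]
      ring
  have hy_mem : ∀ a, y a ∈ Submodule.span ℝ (Set.range e) := by
    intro a
    have h1 : y a ∈ Submodule.span ℝ (g '' Set.Iic a) := by
      rw [hgdef, span_gramSchmidt_Iic ℝ y a]
      exact Submodule.subset_span ⟨a, le_refl a, rfl⟩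
    refine Submodule.span_le.2 ?_ h1
    rintro u ⟨j, _, rfl⟩
    have : g j = ‖g j‖ • e j := by
      rw [hedef, smul_smul, mul_inv_cancel₀ (hgpos j).ne', one_smul]
    rw [this]
    exact Submodule.smul_mem _ _ (Submodule.subset_span ⟨j, rfl⟩)
  have hy_rep : ∀ a, y a = ∑ i, ⟪e i, y a⟫ • e i :=
    fun a => aux_parseval e he_orth (y a) (hy_mem a)
  -- the Gram matrix
  set M : Matrix (Fin r) (Fin r) ℝ := Matrix.of fun i j => ⟪e i, y j⟫ with hMdef
  set G : Matrix (Fin r) (Fin r) ℝ := Mᵀ * M with hGdef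
  have hGentry : ∀ a b, G a b = ⟪y a, y b⟫ := by
    intro a b
    have h1 : ⟪y a, y b⟫ = ∑ i, ⟪e i, y a⟫ * ⟪e i, y b⟫ := by
      conv_lhs => rw [hy_rep a]
      rw [sum_inner]
      exact Finset.sum_congr rfl fun i _ => by rw [real_inner_smul_left]
    rw [h1, hGdef]
    simp [Matrix.mul_apply, hMdef]
  have hG_psd : G.PosSemidef := by
    rw [hGdef, ← Matrix.conjTranspose_eq_transpose_of_trivial]
    exact Matrix.posSemidef_conjTranspose_mul_self M
  have hG : G.IsHermitian := hG_psd.isHermitian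
  -- determinant lower bound
  have hMtri : M.BlockTriangular id := by
    intro i j hij
    show ⟪e i, y j⟫ = 0
    rw [hedef]
    simp only [real_inner_smul_left]
    have hji : y j ∈ Submodule.span ℝ (g '' Set.Iic j) := by
      rw [hgdef, span_gramSchmidt_Iic ℝ y j]
      exact Submodule.subset_span ⟨j, le_refl j, rfl⟩
    have hmem : g i ∈ (Submodule.span ℝ (g '' Set.Iic j))ᗮ := by
      apply aux_mem_orthogonal_span
      rintro u ⟨l, hl, rfl⟩
      exact gramSchmidt_orthogonal ℝ y (lt_of_le_of_lt hl hij).ne'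
    rw [(Submodule.mem_orthogonal' _ _).1 hmem _ hji, mul_zero]
  have hMdiag : ∀ i, M i i = ‖g i‖ := by
    intro i
    show ⟪e i, y i⟫ = ‖g i‖
    have hinner : ⟪g i, y i⟫ = ‖g i‖^2 := by
      conv_lhs => rw [gramSchmidt_def' ℝ y i]
      rw [inner_add_right, inner_sum]
      have hz : ∀ j ∈ Finset.Iio i,
          ⟪(gramSchmidt ℝ y i : EuclideanSpace ℝ (Fin d)),
            ((ℝ ∙ gramSchmidt ℝ y j).starProjection (y i))⟫ = 0 := by
        intro j hj
        obtain ⟨c, hc⟩ := Submodule.mem_span_singleton.1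
          (Submodule.starProjection_apply_mem (ℝ ∙ gramSchmidt ℝ y j) (y i))
        rw [← hc, real_inner_smul_right,
          gramSchmidt_orthogonal ℝ y (Finset.mem_Iio.1 hj).ne', mul_zero]
      rw [Finset.sum_eq_zero hz, add_zero, real_inner_self_eq_norm_sq, hgdef]
    rw [hedef, real_inner_smul_left, hgdef] at *
    rw [hinner]
    rw [pow_two]
    field_simp
  have hdetM : M.det = ∏ i, ‖g i‖ := by
    rw [Matrix.det_of_upperTriangular hMtri]
    exact Finset.prod_congr rfl fun i _ => hMdiag i
  have hdetG : δ ^ (2*r) ≤ G.det := by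
    rw [hGdef, Matrix.det_mul, Matrix.det_transpose, hdetM]
    have h1 : δ ^ r ≤ ∏ i, ‖g i‖ := by
      calc δ ^ r = ∏ _i : Fin r, δ := by
            rw [Finset.prod_const, Finset.card_univ, Fintype.card_fin]
        _ ≤ ∏ i, ‖g i‖ := Finset.prod_le_prod (fun _ _ => hδ0.le) (fun i _ => hgδ i)
    have h2 : (0:ℝ) ≤ δ ^ r := pow_nonneg hδ0.le r
    calc δ^(2*r) = δ^r * δ^r := by rw [← pow_add, two_mul]
      _ ≤ (∏ i, ‖g i‖) * (∏ i, ‖g i‖) := mul_le_mul h1 h1 h2 (le_trans h2 h1)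
  -- spectral decomposition
  set μ : Fin r → ℝ := hG.eigenvalues with hμdef
  have hμ0 : ∀ j, 0 ≤ μ j := hG_psd.eigenvalues_nonneg
  have hdetμ : G.det = ∏ j, μ j := by
    have := hG.det_eq_prod_eigenvalues
    simpa using this
  have htrace : ∑ j, μ j = (r:ℝ) := by
    have h1 : G.trace = (r:ℝ) := by
      rw [Matrix.trace]
      have : ∀ i, G.diag i = 1 := by
        intro i
        show G i i = 1
        rw [hGentry i i, real_inner_self_eq_norm_sq, hunit, one_pow]
      rw [Finset.sum_congr rfl fun i _ => this i]
      simp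
    have h2 : G.trace = ∑ j, μ j := by
      conv_lhs => rw [hG.spectral_theorem]
      rw [Unitary.conjStarAlgAut_apply, Matrix.trace_mul_cycle]
      have hu : (star (hG.eigenvectorUnitary : Matrix (Fin r) (Fin r) ℝ)) *
          (hG.eigenvectorUnitary : Matrix (Fin r) (Fin r) ℝ) = 1 :=
        Unitary.coe_star_mul_self _
      rw [hu, Matrix.one_mul, Matrix.trace_diagonal]
      simp
      rfl
    rw [← h2, h1]
  have hμle : ∀ j, μ j ≤ (r:ℝ) := by
    intro j
    rw [← htrace]
    exact Finset.single_le_sum (fun i _ => hμ0 i) (Finset.mem_univ j)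
  -- sort eigenvalues
  set σp := Tuple.sort μ with hσdef
  set ν : Fin r → ℝ := μ ∘ σp with hνdef
  have hmono : Monotone ν := Tuple.monotone_sort μ
  have hν0 : ∀ j, 0 ≤ ν j := fun j => hμ0 _
  have hνle : ∀ j, ν j ≤ (r:ℝ) := fun j => hμle _
  set T : Fin r := ⟨r - k, by omega⟩ with hTdef
  have hprodν : ∏ j, ν j = ∏ j, μ j := by
    rw [hνdef]
    exact Equiv.prod_comp σp μ
  have hfilter1 : Finset.univ.filter (fun j => j ≤ T) = Finset.Iic T := by
    ext j; simp
  have hfilter2 : Finset.univ.filter (fun j => ¬ j ≤ T) = Finset.Ioi T := by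
    ext j; simp [not_le]
  have hcard1 : (Finset.Iic T).card = r - k + 1 := by
    rw [Fin.card_Iic]
  have hcard2 : (Finset.Ioi T).card = k - 1 := by
    rw [Fin.card_Ioi]
    show r - 1 - (r - k) = k - 1
    omega
  have hb1 : ∏ j ∈ Finset.Iic T, ν j ≤ ν T ^ (r - k + 1) := by
    calc ∏ j ∈ Finset.Iic T, ν j ≤ ∏ _j ∈ Finset.Iic T, ν T :=
          Finset.prod_le_prod (fun j _ => hν0 j)
            (fun j hj => hmono (Finset.mem_Iic.1 hj))
      _ = ν T ^ (r - k + 1) := by rw [Finset.prod_const, hcard1]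
  have hb2 : ∏ j ∈ Finset.Ioi T, ν j ≤ (r:ℝ) ^ (k - 1) := by
    calc ∏ j ∈ Finset.Ioi T, ν j ≤ ∏ _j ∈ Finset.Ioi T, (r:ℝ) :=
          Finset.prod_le_prod (fun j _ => hν0 j) (fun j _ => hνle j)
      _ = (r:ℝ) ^ (k - 1) := by rw [Finset.prod_const, hcard2]
  have hνT : δ^(2*r) ≤ ν T ^ (r-k+1) * (r:ℝ)^(k-1) := by
    have hsplit : (∏ j ∈ Finset.Iic T, ν j) * (∏ j ∈ Finset.Ioi T, ν j) = ∏ j, ν j := by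
      rw [← hfilter1, ← hfilter2]
      exact Finset.prod_filter_mul_prod_filter_not _ _ _
    calc δ^(2*r) ≤ G.det := hdetG
      _ = ∏ j, ν j := by rw [hdetμ, hprodν]
      _ = (∏ j ∈ Finset.Iic T, ν j) * (∏ j ∈ Finset.Ioi T, ν j) := hsplit.symm
      _ ≤ ν T ^ (r-k+1) * (r:ℝ)^(k-1) :=
          mul_le_mul hb1 hb2 (Finset.prod_nonneg fun j _ => hν0 j)
            (pow_nonneg (hν0 T) _)
  -- lower bound on ν T
  set p : ℝ := s / (s - 1) with hpdef
  set lam0 : ℝ := δ ^ (2*p) * (r:ℝ) ^ (-(1/(s-1))) with hlamdef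
  have hlam0pos : 0 < lam0 := by
    apply mul_pos (Real.rpow_pos_of_pos hδ0 _) (Real.rpow_pos_of_pos hrpos _)
  have hmcast : ((r - k + 1 : ℕ) : ℝ) = (r:ℝ) - k + 1 := by
    push_cast [Nat.cast_sub hkr]
    ring
  have hk1' : (1:ℝ) ≤ (k:ℝ) := by exact_mod_cast hk1
  have hexp1 : (r:ℝ) * (s-1) ≤ s * ((r:ℝ) - k + 1) := by nlinarith [hkey]
  have hexp2 : ((k:ℝ) - 1) * (s-1) ≤ (r:ℝ) - k + 1 := by nlinarith [hkey, hk1']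
  have hlam_le : lam0 ^ (r-k+1) * (r:ℝ)^(k-1) ≤ δ^(2*r) := by
    have e1 : lam0 ^ (r-k+1)
        = δ ^ (2*p*((r:ℝ)-k+1)) * (r:ℝ) ^ (-(((r:ℝ)-k+1)/(s-1))) := by
      rw [hlamdef, mul_pow, ← Real.rpow_natCast (δ ^ (2*p)) (r-k+1),
        ← Real.rpow_natCast ((r:ℝ) ^ (-(1/(s-1)))) (r-k+1),
        ← Real.rpow_mul hδ0.le, ← Real.rpow_mul hrpos.le, hmcast]
      ring_nf
    have e2 : (r:ℝ)^(k-1) = (r:ℝ) ^ (((k:ℝ)-1)) := by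
      rw [← Real.rpow_natCast (r:ℝ) (k-1)]
      congr 1
      push_cast [Nat.cast_sub hk1]
      ring
    rw [e1, e2, mul_assoc, ← Real.rpow_add hrpos]
    have hδle : δ ^ (2*p*((r:ℝ)-k+1)) ≤ δ ^ ((2*r : ℕ) : ℝ) := by
      apply Real.rpow_le_rpow_of_exponent_ge hδ0 hδ1
      push_cast
      rw [hpdef, show 2*(s/(s-1))*((r:ℝ)-(k:ℝ)+1) = 2*(s*((r:ℝ)-(k:ℝ)+1))/(s-1) by ring,
        le_div_iff₀ hs0]
      nlinarith [hexp1]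
    have hrle : (r:ℝ) ^ (-(((r:ℝ)-k+1)/(s-1)) + ((k:ℝ)-1)) ≤ 1 := by
      apply Real.rpow_le_one_of_one_le_of_nonpos (by exact_mod_cast hr)
      rw [← sub_nonneg]
      have h3 : (0:ℝ) ≤ ((r:ℝ)-k+1)/(s-1) - ((k:ℝ)-1) := by
        rw [sub_nonneg, le_div_iff₀ hs0]
        linarith [hexp2]
      linarith
    calc δ ^ (2*p*((r:ℝ)-k+1)) * (r:ℝ) ^ (-(((r:ℝ)-k+1)/(s-1)) + ((k:ℝ)-1))
        ≤ δ ^ ((2*r:ℕ):ℝ) * 1 := by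
          apply mul_le_mul hδle hrle (Real.rpow_nonneg hrpos.le _)
            (Real.rpow_nonneg hδ0.le _)
      _ = δ ^ (2*r) := by rw [mul_one, Real.rpow_natCast]
  have hlamνT : lam0 ≤ ν T := by
    have h2 : lam0 ^ (r-k+1) ≤ ν T ^ (r-k+1) := by
      have := hlam_le.trans hνT
      exact le_of_mul_le_mul_right this (pow_pos hrpos (k-1))
    exact (pow_le_pow_iff_left₀ hlam0pos.le (hν0 T) (by omega)).1 h2
  -- construct z
  set v := hG.eigenvectorBasis with hvdef
  have hGv : ∀ j, G *ᵥ ⇑(v j) = μ j • ⇑(v j) := fun j => hG.mulVec_eigenvectorBasis j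
  have hvinner : ∀ a b : Fin r, ⟪v a, v b⟫ = if a = b then (1:ℝ) else 0 :=
    fun a b => orthonormal_iff_ite.1 v.orthonormal a b
  have hinner_sum : ∀ q q' : Fin r,
      ⟪(∑ j, (v q) j • y j), (∑ j, (v q') j • y j)⟫
        = μ q' * (if q = q' then 1 else 0) := by
    intro q q'
    have step1 : ⟪(∑ j, (v q) j • y j), (∑ j, (v q') j • y j)⟫
        = ∑ a, (v q) a * ((G *ᵥ ⇑(v q')) a) := by
      rw [sum_inner]
      refine Finset.sum_congr rfl fun a _ => ?_
      rw [real_inner_smul_left, inner_sum]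
      congr 1
      show (∑ b, ⟪y a, (v q') b • y b⟫) = ∑ b, G a b * (v q') b
      refine Finset.sum_congr rfl fun b _ => ?_
      rw [real_inner_smul_right, hGentry a b]
      ring
    rw [step1, hGv q']
    have step2 : ∑ a, (v q) a * ((μ q' • ⇑(v q')) a) = μ q' * ∑ a, (v q) a * (v q') a := by
      rw [Finset.mul_sum]
      refine Finset.sum_congr rfl fun a _ => ?_
      simp [Pi.smul_apply]
      ring
    rw [step2]
    congr 1
    rw [← hvinner q q']
    simp [PiLp.inner_apply]
    exact Finset.sum_congr rfl fun x _ => mul_comm _ _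
  have hidx : ∀ i : Fin k, r - k + i.1 < r := by
    intro i
    have := i.isLt
    omega
  set J : Fin k → Fin r := fun i => σp ⟨r - k + i.1, hidx i⟩ with hJdef
  have hJinj : Function.Injective J := by
    intro a b hab
    rw [hJdef] at hab
    have h1 := σp.injective hab
    have h2 : r - k + a.1 = r - k + b.1 := congrArg Fin.val h1
    exact Fin.ext (by omega)
  have hTle : ∀ i : Fin k, ν T ≤ μ (J i) := by
    intro i
    have hle : T ≤ (⟨r - k + i.1, hidx i⟩ : Fin r) := by
      rw [Fin.le_def]
      show r - k ≤ r - k + i.1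
      omega
    exact hmono hle
  have hμJpos : ∀ i, 0 < μ (J i) :=
    fun i => lt_of_lt_of_le (lt_of_lt_of_le hlam0pos hlamνT) (hTle i)
  set z : Fin k → EuclideanSpace ℝ (Fin d) :=
    fun i => (Real.sqrt (μ (J i)))⁻¹ • ∑ j, (v (J i)) j • y j with hzdef
  have hsqpos : ∀ i : Fin k, 0 < Real.sqrt (μ (J i)) :=
    fun i => Real.sqrt_pos.2 (hμJpos i)
  refine ⟨z, ?_, ?_⟩
  · rw [orthonormal_iff_ite]
    intro i i'
    rw [hzdef]
    simp only [real_inner_smul_left, real_inner_smul_right]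
    rw [hinner_sum (J i) (J i')]
    by_cases h : i = i'
    · subst h
      rw [if_pos rfl, if_pos rfl, mul_one]
      rw [← Real.mul_self_sqrt (hμJpos i).le]
      field_simp
      rw [Real.sqrt_sq (hsqpos i).le]
      exact div_self (pow_pos (hsqpos i) 2).ne'
    · have hne : J i ≠ J i' := fun hc => h (hJinj hc)
      rw [if_neg hne, if_neg h]
      ring
  · intro a i
    set Mx := Finset.univ.sup'
      (Finset.univ_nonempty_iff.mpr (Fin.pos_iff_nonempty.mp hr))
      (fun j => |⟪y j, a⟫|) with hMxdef
    have hMx : ∀ j, |⟪y j, a⟫| ≤ Mx := fun j =>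
      Finset.le_sup' (fun j => |⟪y j, a⟫|) (Finset.mem_univ j)
    have hMx0 : 0 ≤ Mx := le_trans (abs_nonneg _) (hMx ⟨0, hr⟩)
    have hcsum : ∑ j, ((v (J i)) j)^2 = 1 := by
      have hn : ‖v (J i)‖ = 1 := v.orthonormal.1 (J i)
      have h1 := EuclideanSpace.norm_eq (v (J i))
      rw [hn] at h1
      have h2 : ∑ j, ‖(v (J i)) j‖^2 = 1 := Real.sqrt_eq_one.1 h1.symm
      simpa [Real.norm_eq_abs, sq_abs] using h2
    have habs : ∑ j, |(v (J i)) j| ≤ Real.sqrt r := by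
      apply Real.le_sqrt_of_sq_le
      calc (∑ j, |(v (J i)) j|)^2
          ≤ (Finset.univ.card : ℝ) * ∑ j, |(v (J i)) j|^2 :=
            sq_sum_le_card_mul_sum_sq
        _ = r := by
            rw [Finset.card_univ, Fintype.card_fin]
            rw [Finset.sum_congr rfl fun j _ => sq_abs _, hcsum, mul_one]
    have hform : ⟪z i, a⟫ = (Real.sqrt (μ (J i)))⁻¹ * ∑ j, (v (J i)) j * ⟪y j, a⟫ := by
      rw [hzdef]
      simp only [real_inner_smul_left]
      congr 1
      rw [sum_inner]
      exact Finset.sum_congr rfl fun j _ => by rw [real_inner_smul_left]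
    have h1 : |∑ j, (v (J i)) j * ⟪y j, a⟫| ≤ Real.sqrt r * Mx := by
      calc |∑ j, (v (J i)) j * ⟪y j, a⟫| ≤ ∑ j, |(v (J i)) j * ⟪y j, a⟫| :=
            Finset.abs_sum_le_sum_abs _ _
        _ = ∑ j, |(v (J i)) j| * |⟪y j, a⟫| := by
            exact Finset.sum_congr rfl fun j _ => abs_mul _ _
        _ ≤ ∑ j, |(v (J i)) j| * Mx :=
            Finset.sum_le_sum fun j _ =>
              mul_le_mul_of_nonneg_left (hMx j) (abs_nonneg _)
        _ = (∑ j, |(v (J i)) j|) * Mx := by rw [← Finset.sum_mul]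
        _ ≤ Real.sqrt r * Mx := mul_le_mul_of_nonneg_right habs hMx0
    -- the constant
    set C : ℝ := (Real.sqrt r / δ) ^ (s / (s-1)) with hCdef
    have hC0 : 0 ≤ C := Real.rpow_nonneg (div_nonneg (Real.sqrt_nonneg _) hδ0.le) _
    have hC2lam : C^2 * lam0 = r := by
      have hx : (0:ℝ) ≤ Real.sqrt r / δ := div_nonneg (Real.sqrt_nonneg _) hδ0.le
      have e1 : C^2 = (Real.sqrt r / δ) ^ (p * 2) := by
        rw [hCdef, ← hpdef, ← Real.rpow_natCast ((Real.sqrt r / δ) ^ p) 2,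
          ← Real.rpow_mul hx]
        norm_num
      have e2 : (Real.sqrt r / δ) ^ (p * 2)
          = (r:ℝ) ^ p / δ ^ (2*p) := by
        rw [Real.div_rpow (Real.sqrt_nonneg _) hδ0.le]
        congr 1
        · rw [Real.sqrt_eq_rpow, ← Real.rpow_mul hrpos.le]
          congr 1
          ring
        · congr 1
          ring
      rw [e1, e2, hlamdef]
      have hδp : (0:ℝ) < δ ^ (2*p) := Real.rpow_pos_of_pos hδ0 _
      rw [div_mul_eq_mul_div, mul_comm (δ ^ (2*p)) ((r:ℝ) ^ (-(1/(s-1))))]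
      rw [show (r:ℝ) ^ p * ((r:ℝ) ^ (-(1/(s-1))) * δ ^ (2*p)) / δ ^ (2*p)
          = (r:ℝ) ^ p * (r:ℝ) ^ (-(1/(s-1))) * (δ ^ (2*p) / δ ^ (2*p)) by ring]
      rw [div_self hδp.ne', mul_one, ← Real.rpow_add hrpos]
      rw [show p + -(1/(s-1)) = (s-1)/(s-1) by rw [hpdef]; ring]
      rw [div_self hs0.ne', Real.rpow_one]
    have hrC : (r:ℝ) ≤ C^2 * μ (J i) := by
      calc (r:ℝ) = C^2 * lam0 := hC2lam.symm
        _ ≤ C^2 * μ (J i) := by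
            apply mul_le_mul_of_nonneg_left _ (sq_nonneg C)
            exact le_trans hlamνT (hTle i)
    have hsC : Real.sqrt r ≤ C * Real.sqrt (μ (J i)) := by
      have := Real.sqrt_le_sqrt hrC
      rwa [Real.sqrt_mul (sq_nonneg C), Real.sqrt_sq hC0] at this
    have hC2 : (Real.sqrt (μ (J i)))⁻¹ * Real.sqrt r ≤ C := by
      rw [inv_mul_le_iff₀ (hsqpos i)]
      linarith [hsC]
    rw [hform, abs_mul, abs_of_pos (inv_pos.2 (hsqpos i))]
    calc (Real.sqrt (μ (J i)))⁻¹ * |∑ j, (v (J i)) j * ⟪y j, a⟫|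
        ≤ (Real.sqrt (μ (J i)))⁻¹ * (Real.sqrt r * Mx) :=
          mul_le_mul_of_nonneg_left h1 (inv_pos.2 (hsqpos i)).le
      _ = ((Real.sqrt (μ (J i)))⁻¹ * Real.sqrt r) * Mx := by ring
      _ ≤ C * Mx := mul_le_mul_of_nonneg_right hC2 hMx0
end

section
/- Let $J\ge 1$ and let $(V^{(j)}, F^{(j)})_{j\in[J]}$ be i.i.d. pairs of random variables (with densities) such that for each $j$, $V^{(j)}$ and $F^{(j)}$ are independent. Let $\hat j\in[J]$ be any random index that is a measurable function of all the pairs. Then the mutual information of the selected pair satisfies $I(V^{(\hat j)}; F^{(\hat j)}) \le \ln J + \frac{2}{e} \le \ln J + 1$. -/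
open MeasureTheory ProbabilityTheory

section AuxLemmas

lemma aux_neg_mul_log_le (t : ℝ) (ht : 0 ≤ t) : t * Real.log t⁻¹ ≤ (Real.exp 1)⁻¹ := by
  rcases eq_or_lt_of_le ht with h | h
  · simp [← h]; positivity
  · have hlog : Real.log t⁻¹ ≤ t⁻¹ / Real.exp 1 := by
      have h1 : Real.log (t⁻¹ / Real.exp 1) ≤ t⁻¹ / Real.exp 1 - 1 :=
        Real.log_le_sub_one_of_pos (by positivity)
      have := Real.log_div (by positivity : (0:ℝ) < t⁻¹).ne' (Real.exp_ne_zero 1)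
      rw [this, Real.log_exp] at h1
      linarith
    calc t * Real.log t⁻¹ ≤ t * (t⁻¹ / Real.exp 1) := by
          exact mul_le_mul_of_nonneg_left hlog ht
      _ = (Real.exp 1)⁻¹ := by field_simp

lemma aux_mul_abs_log_le {t C : ℝ} (ht : 0 ≤ t) (hC : 1 ≤ C) (htC : t ≤ C) :
    t * |Real.log t| ≤ C * Real.log C + 1 := by
  have hClog : 0 ≤ Real.log C := Real.log_nonneg hC
  rcases le_or_gt t 1 with h1 | h1
  · have hneg : Real.log t ≤ 0 := Real.log_nonpos ht h1
    have : t * |Real.log t| = t * Real.log t⁻¹ := by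
      rw [Real.log_inv, abs_of_nonpos hneg]
    rw [this]
    have := aux_neg_mul_log_le t ht
    have he : (Real.exp 1)⁻¹ ≤ 1 := by
      rw [inv_le_one_iff₀]; right; exact Real.one_le_exp (by norm_num)
    nlinarith [mul_nonneg (hC.trans' zero_le_one) hClog]
  · have hpos : 0 ≤ Real.log t := Real.log_nonneg h1.le
    rw [abs_of_nonneg hpos]
    have : Real.log t ≤ Real.log C := Real.log_le_log (by linarith) htC
    nlinarith

lemma aux_rnDeriv_le_const {α : Type*} [MeasurableSpace α] {μ ν : Measure α}
    [IsFiniteMeasure μ] [SigmaFinite ν] {c : ENNReal} (h : μ ≤ c • ν) :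
    μ.rnDeriv ν ≤ᵐ[ν] fun _ => c := by
  refine ae_le_of_forall_setLIntegral_le_of_sigmaFinite (Measure.measurable_rnDeriv μ ν)
    (fun s hs _ => ?_)
  calc ∫⁻ x in s, μ.rnDeriv ν x ∂ν ≤ μ s := Measure.setLIntegral_rnDeriv_le s
    _ ≤ (c • ν) s := h s
    _ = ∫⁻ _ in s, c ∂ν := by simp [Measure.smul_apply, smul_eq_mul, setLIntegral_const]

lemma aux_prod_withDensity {α β : Type*} [MeasurableSpace α] [MeasurableSpace β]
    (μ : Measure α) (ν : Measure β) [SigmaFinite μ] [SigmaFinite ν]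
    {f : α → ENNReal} {g : β → ENNReal} (hf : Measurable f) (hg : Measurable g)
    [SigmaFinite (μ.withDensity f)] [SigmaFinite (ν.withDensity g)] :
    (μ.withDensity f).prod (ν.withDensity g) =
      (μ.prod ν).withDensity (fun z => f z.1 * g z.2) := by
  refine Measure.prod_eq fun s t hs ht => ?_
  rw [withDensity_apply _ (hs.prod ht), ← Measure.prod_restrict,
    lintegral_prod_mul (hf.aemeasurable) (hg.aemeasurable),
    withDensity_apply _ hs, withDensity_apply _ ht]

end AuxLemmas

/-- The mutual information associated with a joint law `μ` on `α × β`: the Kullback–Leibler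
divergence `∫ ln (dμ/d(μ₁ ⊗ μ₂)) dμ` of `μ` with respect to the product of its marginals. -/
noncomputable def mutualInfoOfJoint {α β : Type*} [MeasurableSpace α] [MeasurableSpace β]
    (μ : Measure (α × β)) : ℝ :=
  ∫ p, Real.log ((μ.rnDeriv ((μ.map Prod.fst).prod (μ.map Prod.snd)) p).toReal) ∂μ

/-- Let `(V j, F j)` for `j < J` be i.i.d. pairs such that within each pair
`V j` and `F j` are independent, and let `ĵ` be any index which is a measurable function of
all the pairs.  Then the mutual information of the selected pair `(V ĵ, F ĵ)` is at most
`ln J + 2/e ≤ ln J + 1`.  (The regularity hypotheses — absolute continuity of the selected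
joint law with respect to the product of its marginals, and integrability of the log-density —
encode the assumption that all variables have densities.) -/
theorem selected_pair_mutual_information_bound
    {Ω : Type*} [MeasureSpace Ω] [IsProbabilityMeasure (ℙ : Measure Ω)]
    {α β : Type*} [MeasurableSpace α] [MeasurableSpace β]
    (J : ℕ) (hJ : 1 ≤ J)
    (V : Fin J → Ω → α) (F : Fin J → Ω → β)
    (hVmeas : ∀ j, Measurable (V j)) (hFmeas : ∀ j, Measurable (F j))
    (hiid : iIndepFun (fun j ω => (V j ω, F j ω)) ℙ)
    (hident : ∀ j j' : Fin J,
      Measure.map (fun ω => (V j ω, F j ω)) ℙ = Measure.map (fun ω => (V j' ω, F j' ω)) ℙ)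
    (hpairindep : ∀ j, IndepFun (V j) (F j) ℙ)
    (jhat : Ω → Fin J)
    (hjhat : Measurable jhat)
    (hjhat_fn : ∃ φ : (Fin J → α × β) → Fin J, Measurable φ ∧
      ∀ ω, jhat ω = φ (fun j => (V j ω, F j ω)))
    (hsel_meas : Measurable fun ω => (V (jhat ω) ω, F (jhat ω) ω))
    (hac : Measure.map (fun ω => (V (jhat ω) ω, F (jhat ω) ω)) ℙ ≪
      ((Measure.map (fun ω => (V (jhat ω) ω, F (jhat ω) ω)) ℙ).map Prod.fst).prod
        ((Measure.map (fun ω => (V (jhat ω) ω, F (jhat ω) ω)) ℙ).map Prod.snd))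
    (hint : Integrable
      (fun p => Real.log
        (((Measure.map (fun ω => (V (jhat ω) ω, F (jhat ω) ω)) ℙ).rnDeriv
          (((Measure.map (fun ω => (V (jhat ω) ω, F (jhat ω) ω)) ℙ).map Prod.fst).prod
            ((Measure.map (fun ω => (V (jhat ω) ω, F (jhat ω) ω)) ℙ).map Prod.snd)) p).toReal))
      (Measure.map (fun ω => (V (jhat ω) ω, F (jhat ω) ω)) ℙ)) :
    mutualInfoOfJoint (Measure.map (fun ω => (V (jhat ω) ω, F (jhat ω) ω)) ℙ) ≤
        Real.log J + 2 / Real.exp 1 ∧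
      Real.log J + 2 / Real.exp 1 ≤ Real.log J + 1 := by
  classical
  -- Part 2 first
  have hexp : (2 : ℝ) ≤ Real.exp 1 := by
    have := Real.exp_one_gt_d9; linarith
  have part2 : Real.log J + 2 / Real.exp 1 ≤ Real.log J + 1 := by
    have : 2 / Real.exp 1 ≤ 1 := by
      rw [div_le_one (Real.exp_pos 1)]; exact hexp
    linarith
  refine ⟨?_, part2⟩
  -- Notation
  set μ : Measure (α × β) := Measure.map (fun ω => (V (jhat ω) ω, F (jhat ω) ω)) ℙ with hμdef
  haveI : IsProbabilityMeasure μ := Measure.isProbabilityMeasure_map hsel_meas.aemeasurable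
  set μ₁ : Measure α := μ.map Prod.fst with hμ₁def
  set μ₂ : Measure β := μ.map Prod.snd with hμ₂def
  haveI : IsProbabilityMeasure μ₁ := Measure.isProbabilityMeasure_map measurable_fst.aemeasurable
  haveI : IsProbabilityMeasure μ₂ := Measure.isProbabilityMeasure_map measurable_snd.aemeasurable
  set π : Measure (α × β) := μ₁.prod μ₂ with hπdef
  have j₀ : Fin J := ⟨0, hJ⟩
  set pV : Measure α := Measure.map (V j₀) ℙ with hpVdef
  set pF : Measure β := Measure.map (F j₀) ℙ with hpFdef
  haveI : IsProbabilityMeasure pV := Measure.isProbabilityMeasure_map (hVmeas j₀).aemeasurable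
  haveI : IsProbabilityMeasure pF := Measure.isProbabilityMeasure_map (hFmeas j₀).aemeasurable
  set ν : Measure (α × β) := pV.prod pF with hνdef
  have hνeq : Measure.map (fun ω => (V j₀ ω, F j₀ ω)) ℙ = ν :=
    (indepFun_iff_map_prod_eq_prod_map_map (hVmeas j₀).aemeasurable
      (hFmeas j₀).aemeasurable).mp (hpairindep j₀)
  set c : ENNReal := (J : ENNReal) with hcdef
  have hc_ne_top : c ≠ ⊤ := ENNReal.natCast_ne_top J
  -- Step 1 : μ ≤ c • ν
  have hle : μ ≤ c • ν := by
    rw [Measure.le_iff]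
    intro s hs
    have h1 : μ s = ℙ ((fun ω => (V (jhat ω) ω, F (jhat ω) ω)) ⁻¹' s) := by
      rw [hμdef, Measure.map_apply hsel_meas hs]
    have h2 : (fun ω => (V (jhat ω) ω, F (jhat ω) ω)) ⁻¹' s ⊆
        ⋃ j, (fun ω => (V j ω, F j ω)) ⁻¹' s :=
      fun ω hω => Set.mem_iUnion.2 ⟨jhat ω, hω⟩
    have h3 : ∀ j : Fin J, ℙ ((fun ω => (V j ω, F j ω)) ⁻¹' s) = ν s := by
      intro j
      rw [← Measure.map_apply ((hVmeas j).prodMk (hFmeas j)) hs, hident j j₀, hνeq]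
    calc μ s = ℙ ((fun ω => (V (jhat ω) ω, F (jhat ω) ω)) ⁻¹' s) := h1
      _ ≤ ℙ (⋃ j, (fun ω => (V j ω, F j ω)) ⁻¹' s) := measure_mono h2
      _ ≤ ∑' j : Fin J, ℙ ((fun ω => (V j ω, F j ω)) ⁻¹' s) := measure_iUnion_le _
      _ = ∑' _ : Fin J, ν s := by exact tsum_congr h3
      _ = c * ν s := by
          rw [tsum_fintype]
          simp [Finset.sum_const, Finset.card_univ, hcdef, mul_comm]
      _ = (c • ν) s := by simp [Measure.smul_apply, smul_eq_mul]
  have hμν : μ ≪ ν := Measure.absolutelyContinuous_of_le_smul hle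
  -- marginals
  have hm1 : μ₁ ≤ c • pV := by
    have := Measure.map_mono (f := Prod.fst) hle measurable_fst
    rwa [Measure.map_smul, hνdef, Measure.map_fst_prod, measure_univ, one_smul] at this
  have hm2 : μ₂ ≤ c • pF := by
    have := Measure.map_mono (f := Prod.snd) hle measurable_snd
    rwa [Measure.map_smul, hνdef, Measure.map_snd_prod, measure_univ, one_smul] at this
  have hμ₁ : μ₁ ≪ pV := Measure.absolutelyContinuous_of_le_smul hm1
  have hμ₂ : μ₂ ≪ pF := Measure.absolutelyContinuous_of_le_smul hm2
  have hπν : π ≪ ν := hμ₁.prod hμ₂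
  -- densities
  set a : α → ENNReal := μ₁.rnDeriv pV with hadef
  set b : β → ENNReal := μ₂.rnDeriv pF with hbdef
  have haMeas : Measurable a := Measure.measurable_rnDeriv _ _
  have hbMeas : Measurable b := Measure.measurable_rnDeriv _ _
  have hwd1 : pV.withDensity a = μ₁ := Measure.withDensity_rnDeriv_eq _ _ hμ₁
  have hwd2 : pF.withDensity b = μ₂ := Measure.withDensity_rnDeriv_eq _ _ hμ₂
  haveI : SigmaFinite (pV.withDensity a) := hwd1.symm ▸ (inferInstance : SigmaFinite μ₁)
  haveI : SigmaFinite (pF.withDensity b) := hwd2.symm ▸ (inferInstance : SigmaFinite μ₂)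
  have hπ_eq : π = ν.withDensity (fun z => a z.1 * b z.2) := by
    rw [hπdef, ← hwd1, ← hwd2, hνdef]
    exact aux_prod_withDensity pV pF haMeas hbMeas
  have hπrn : π.rnDeriv ν =ᵐ[ν] fun z => a z.1 * b z.2 := by
    rw [hπ_eq]
    exact Measure.rnDeriv_withDensity ν ((haMeas.comp measurable_fst).mul
      (hbMeas.comp measurable_snd))
  have hchain : μ.rnDeriv π * π.rnDeriv ν =ᵐ[ν] μ.rnDeriv ν :=
    Measure.rnDeriv_mul_rnDeriv hac
  -- a.e. facts transferred to μ
  have hg_pos : ∀ᵐ z ∂μ, 0 < μ.rnDeriv π z := Measure.rnDeriv_pos hac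
  have hg_fin : ∀ᵐ z ∂μ, μ.rnDeriv π z < ⊤ :=
    (Measure.rnDeriv_lt_top μ π).filter_mono hac.ae_le
  have hk_le : ∀ᵐ z ∂μ, μ.rnDeriv ν z ≤ c :=
    (aux_rnDeriv_le_const hle).filter_mono hμν.ae_le
  have hchainμ : ∀ᵐ z ∂μ, μ.rnDeriv π z * π.rnDeriv ν z = μ.rnDeriv ν z :=
    hchain.filter_mono hμν.ae_le
  have hπrnμ : ∀ᵐ z ∂μ, π.rnDeriv ν z = a z.1 * b z.2 := hπrn.filter_mono hμν.ae_le
  -- facts on a, transferred along fst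
  have ha₁ : ∀ᵐ x ∂μ₁, 0 < a x ∧ a x ≤ c := by
    filter_upwards [Measure.rnDeriv_pos hμ₁,
      (aux_rnDeriv_le_const hm1).filter_mono hμ₁.ae_le] with x h1 h2
    exact ⟨h1, h2⟩
  have hb₁ : ∀ᵐ y ∂μ₂, 0 < b y ∧ b y ≤ c := by
    filter_upwards [Measure.rnDeriv_pos hμ₂,
      (aux_rnDeriv_le_const hm2).filter_mono hμ₂.ae_le] with y h1 h2
    exact ⟨h1, h2⟩
  have hafst : ∀ᵐ z ∂μ, 0 < a z.1 ∧ a z.1 ≤ c := by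
    rw [hμ₁def] at ha₁
    exact (ae_map_iff measurable_fst.aemeasurable
      ((measurableSet_lt measurable_const haMeas).inter
        (measurableSet_le haMeas measurable_const))).mp ha₁
  have hbsnd : ∀ᵐ z ∂μ, 0 < b z.2 ∧ b z.2 ≤ c := by
    rw [hμ₂def] at hb₁
    exact (ae_map_iff measurable_snd.aemeasurable
      ((measurableSet_lt measurable_const hbMeas).inter
        (measurableSet_le hbMeas measurable_const))).mp hb₁
  -- pointwise log identity
  have hlog : ∀ᵐ z ∂μ, Real.log (μ.rnDeriv π z).toReal =
      Real.log (μ.rnDeriv ν z).toReal - Real.log (a z.1).toReal -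
        Real.log (b z.2).toReal := by
    filter_upwards [hchainμ, hπrnμ, hg_pos, hg_fin, hafst, hbsnd] with z h1 h2 h3 h4 h5 h6
    have hk : μ.rnDeriv ν z = μ.rnDeriv π z * (a z.1 * b z.2) := by
      rw [← h1, h2]
    have hgne : (μ.rnDeriv π z).toReal ≠ 0 :=
      (ENNReal.toReal_pos h3.ne' h4.ne).ne'
    have hane : (a z.1).toReal ≠ 0 :=
      (ENNReal.toReal_pos h5.1.ne' (lt_of_le_of_lt h5.2 hc_ne_top.lt_top).ne).ne'
    have hbne : (b z.2).toReal ≠ 0 :=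
      (ENNReal.toReal_pos h6.1.ne' (lt_of_le_of_lt h6.2 hc_ne_top.lt_top).ne).ne'
    rw [hk, ENNReal.toReal_mul, ENNReal.toReal_mul, Real.log_mul hgne (by
        exact mul_ne_zero hane hbne), Real.log_mul hane hbne]
    ring
  -- Integrability of the marginal log-density terms
  have hCfact : (1:ℝ) ≤ (J:ℝ) := by exact_mod_cast hJ
  set C : ℝ := (J:ℝ) * Real.log J + 1 with hCdef
  have haint₁ : Integrable (fun x => Real.log (a x).toReal) μ₁ := by
    refine ⟨((Measure.measurable_rnDeriv μ₁ pV).ennreal_toReal.log).aestronglyMeasurable, ?_⟩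
    show (∫⁻ x, (‖Real.log (a x).toReal‖₊ : ENNReal) ∂μ₁) < ⊤
    have heq : ∫⁻ x, (‖Real.log (a x).toReal‖₊ : ENNReal) ∂μ₁ =
        ∫⁻ x, a x * ‖Real.log (a x).toReal‖₊ ∂pV :=
      (lintegral_rnDeriv_mul hμ₁
        ((haMeas.ennreal_toReal.log).nnnorm.coe_nnreal_ennreal.aemeasurable)).symm
    rw [heq]
    have hbound : ∀ᵐ x ∂pV, a x * ‖Real.log (a x).toReal‖₊ ≤ ENNReal.ofReal C := by
      filter_upwards [aux_rnDeriv_le_const hm1, Measure.rnDeriv_lt_top μ₁ pV] with x hx hfin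
      have hx' : (a x).toReal ≤ (J:ℝ) := by
        have := ENNReal.toReal_mono hc_ne_top hx
        simpa [hcdef] using this
      calc a x * ‖Real.log (a x).toReal‖₊
          = ENNReal.ofReal ((a x).toReal * |Real.log (a x).toReal|) := by
            rw [ENNReal.ofReal_mul ENNReal.toReal_nonneg, ← Real.enorm_eq_ofReal_abs, enorm_eq_nnnorm,
              ENNReal.ofReal_toReal hfin.ne]
        _ ≤ ENNReal.ofReal C :=
            ENNReal.ofReal_le_ofReal
              (aux_mul_abs_log_le ENNReal.toReal_nonneg hCfact hx')
    calc ∫⁻ x, a x * ‖Real.log (a x).toReal‖₊ ∂pV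
        ≤ ∫⁻ _, ENNReal.ofReal C ∂pV := lintegral_mono_ae hbound
      _ = ENNReal.ofReal C := by simp
      _ < ⊤ := ENNReal.ofReal_lt_top
  have hbint₁ : Integrable (fun y => Real.log (b y).toReal) μ₂ := by
    refine ⟨((Measure.measurable_rnDeriv μ₂ pF).ennreal_toReal.log).aestronglyMeasurable, ?_⟩
    show (∫⁻ y, (‖Real.log (b y).toReal‖₊ : ENNReal) ∂μ₂) < ⊤
    have heq : ∫⁻ y, (‖Real.log (b y).toReal‖₊ : ENNReal) ∂μ₂ =
        ∫⁻ y, b y * ‖Real.log (b y).toReal‖₊ ∂pF :=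
      (lintegral_rnDeriv_mul hμ₂
        ((hbMeas.ennreal_toReal.log).nnnorm.coe_nnreal_ennreal.aemeasurable)).symm
    rw [heq]
    have hbound : ∀ᵐ y ∂pF, b y * ‖Real.log (b y).toReal‖₊ ≤ ENNReal.ofReal C := by
      filter_upwards [aux_rnDeriv_le_const hm2, Measure.rnDeriv_lt_top μ₂ pF] with y hy hfin
      have hy' : (b y).toReal ≤ (J:ℝ) := by
        have := ENNReal.toReal_mono hc_ne_top hy
        simpa [hcdef] using this
      calc b y * ‖Real.log (b y).toReal‖₊
          = ENNReal.ofReal ((b y).toReal * |Real.log (b y).toReal|) := by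
            rw [ENNReal.ofReal_mul ENNReal.toReal_nonneg, ← Real.enorm_eq_ofReal_abs, enorm_eq_nnnorm,
              ENNReal.ofReal_toReal hfin.ne]
        _ ≤ ENNReal.ofReal C :=
            ENNReal.ofReal_le_ofReal
              (aux_mul_abs_log_le ENNReal.toReal_nonneg hCfact hy')
    calc ∫⁻ y, b y * ‖Real.log (b y).toReal‖₊ ∂pF
        ≤ ∫⁻ _, ENNReal.ofReal C ∂pF := lintegral_mono_ae hbound
      _ = ENNReal.ofReal C := by simp
      _ < ⊤ := ENNReal.ofReal_lt_top
  have hA_int : Integrable (fun z : α × β => Real.log (a z.1).toReal) μ := by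
    rw [hμ₁def] at haint₁
    exact (integrable_map_measure
      ((haMeas.ennreal_toReal.log).aestronglyMeasurable)
      measurable_fst.aemeasurable).mp haint₁
  have hB_int : Integrable (fun z : α × β => Real.log (b z.2).toReal) μ := by
    rw [hμ₂def] at hbint₁
    exact (integrable_map_measure
      ((hbMeas.ennreal_toReal.log).aestronglyMeasurable)
      measurable_snd.aemeasurable).mp hbint₁
  have hK_int : Integrable (fun z => Real.log (μ.rnDeriv ν z).toReal) μ := by
    have hKeq : (fun z => Real.log (μ.rnDeriv ν z).toReal) =ᵐ[μ]
        fun z => Real.log (μ.rnDeriv π z).toReal + Real.log (a z.1).toReal +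
          Real.log (b z.2).toReal := by
      filter_upwards [hlog] with z hz
      rw [hz]; ring
    exact ((hint.add hA_int).add hB_int).congr hKeq.symm
  -- Integral identity
  have hMI : mutualInfoOfJoint μ =
      (∫ z, Real.log (μ.rnDeriv ν z).toReal ∂μ) -
      (∫ z, Real.log (a z.1).toReal ∂μ) -
      (∫ z, Real.log (b z.2).toReal ∂μ) := by
    rw [mutualInfoOfJoint, ← hμ₁def, ← hμ₂def, ← hπdef]
    rw [integral_congr_ae hlog]
    have hKA : Integrable (fun z => Real.log (μ.rnDeriv ν z).toReal -
        Real.log (a z.1).toReal) μ := hK_int.sub hA_int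
    rw [integral_sub hKA hB_int, integral_sub hK_int hA_int]
  -- Bound on the main term
  have hbound1 : (∫ z, Real.log (μ.rnDeriv ν z).toReal ∂μ) ≤ Real.log J := by
    have hb : ∀ᵐ z ∂μ, Real.log (μ.rnDeriv ν z).toReal ≤ Real.log J := by
      filter_upwards [hk_le] with z hz
      have ht : (μ.rnDeriv ν z).toReal ≤ (J:ℝ) := by
        have := ENNReal.toReal_mono hc_ne_top hz
        simpa [hcdef] using this
      rcases le_or_gt (μ.rnDeriv ν z).toReal 1 with h1 | h1
      · exact le_trans (Real.log_nonpos ENNReal.toReal_nonneg h1) (Real.log_nonneg hCfact)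
      · exact Real.log_le_log (by linarith) ht
    calc (∫ z, Real.log (μ.rnDeriv ν z).toReal ∂μ)
        ≤ ∫ _, Real.log J ∂μ := integral_mono_ae hK_int (integrable_const _) hb
      _ = Real.log J := by simp
  -- Bound on the marginal terms
  have hbound2 : -(∫ x, Real.log (a x).toReal ∂μ₁) ≤ (Real.exp 1)⁻¹ := by
    rw [← integral_neg]
    have hrw : ∫ x, -Real.log (a x).toReal ∂μ₁ =
        ∫ x, (a x).toReal • (-Real.log (a x).toReal) ∂pV :=
      (integral_rnDeriv_smul hμ₁).symm
    rw [hrw]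
    have hGbd : ∀ᵐ x ∂pV, (a x).toReal • (-Real.log (a x).toReal) ≤ (Real.exp 1)⁻¹ := by
      refine Filter.Eventually.of_forall fun x => ?_
      have : (a x).toReal • (-Real.log (a x).toReal) =
          (a x).toReal * Real.log ((a x).toReal)⁻¹ := by
        rw [Real.log_inv, smul_eq_mul]
      rw [this]
      exact aux_neg_mul_log_le _ ENNReal.toReal_nonneg
    have hGint : Integrable (fun x => (a x).toReal • (-Real.log (a x).toReal)) pV := by
      refine Integrable.mono' (integrable_const C) ?_ ?_
      · exact ((haMeas.ennreal_toReal.mul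
          (haMeas.ennreal_toReal.log.neg)).aestronglyMeasurable)
      · filter_upwards [aux_rnDeriv_le_const hm1] with x hx
        have hx' : (a x).toReal ≤ (J:ℝ) := by
          have := ENNReal.toReal_mono hc_ne_top hx
          simpa [hcdef] using this
        have : ‖(a x).toReal • (-Real.log (a x).toReal)‖ =
            (a x).toReal * |Real.log (a x).toReal| := by
          rw [smul_eq_mul, Real.norm_eq_abs, abs_mul, abs_of_nonneg ENNReal.toReal_nonneg, abs_neg]
        rw [this]
        exact aux_mul_abs_log_le ENNReal.toReal_nonneg hCfact hx'
    calc ∫ x, (a x).toReal • (-Real.log (a x).toReal) ∂pV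
        ≤ ∫ _, (Real.exp 1)⁻¹ ∂pV := integral_mono_ae hGint (integrable_const _) hGbd
      _ = (Real.exp 1)⁻¹ := by simp
  have hbound3 : -(∫ y, Real.log (b y).toReal ∂μ₂) ≤ (Real.exp 1)⁻¹ := by
    rw [← integral_neg]
    have hrw : ∫ y, -Real.log (b y).toReal ∂μ₂ =
        ∫ y, (b y).toReal • (-Real.log (b y).toReal) ∂pF :=
      (integral_rnDeriv_smul hμ₂).symm
    rw [hrw]
    have hGbd : ∀ᵐ y ∂pF, (b y).toReal • (-Real.log (b y).toReal) ≤ (Real.exp 1)⁻¹ := by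
      refine Filter.Eventually.of_forall fun y => ?_
      have : (b y).toReal • (-Real.log (b y).toReal) =
          (b y).toReal * Real.log ((b y).toReal)⁻¹ := by
        rw [Real.log_inv, smul_eq_mul]
      rw [this]
      exact aux_neg_mul_log_le _ ENNReal.toReal_nonneg
    have hGint : Integrable (fun y => (b y).toReal • (-Real.log (b y).toReal)) pF := by
      refine Integrable.mono' (integrable_const C) ?_ ?_
      · exact ((hbMeas.ennreal_toReal.mul
          (hbMeas.ennreal_toReal.log.neg)).aestronglyMeasurable)
      · filter_upwards [aux_rnDeriv_le_const hm2] with y hy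
        have hy' : (b y).toReal ≤ (J:ℝ) := by
          have := ENNReal.toReal_mono hc_ne_top hy
          simpa [hcdef] using this
        have : ‖(b y).toReal • (-Real.log (b y).toReal)‖ =
            (b y).toReal * |Real.log (b y).toReal| := by
          rw [smul_eq_mul, Real.norm_eq_abs, abs_mul, abs_of_nonneg ENNReal.toReal_nonneg, abs_neg]
        rw [this]
        exact aux_mul_abs_log_le ENNReal.toReal_nonneg hCfact hy'
    calc ∫ y, (b y).toReal • (-Real.log (b y).toReal) ∂pF
        ≤ ∫ _, (Real.exp 1)⁻¹ ∂pF := integral_mono_ae hGint (integrable_const _) hGbd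
      _ = (Real.exp 1)⁻¹ := by simp
  -- transfer marginal integrals
  have hAmap : (∫ z, Real.log (a z.1).toReal ∂μ) = ∫ x, Real.log (a x).toReal ∂μ₁ := by
    rw [hμ₁def]
    exact (integral_map measurable_fst.aemeasurable
      ((haMeas.ennreal_toReal.log).aestronglyMeasurable)).symm
  have hBmap : (∫ z, Real.log (b z.2).toReal ∂μ) = ∫ y, Real.log (b y).toReal ∂μ₂ := by
    rw [hμ₂def]
    exact (integral_map measurable_snd.aemeasurable
      ((hbMeas.ennreal_toReal.log).aestronglyMeasurable)).symm
  have h2div : 2 / Real.exp 1 = (Real.exp 1)⁻¹ + (Real.exp 1)⁻¹ := by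
    rw [div_eq_mul_inv]; ring
  rw [hMI, hAmap, hBmap, h2div]
  linarith [hbound1, hbound2, hbound3]
end
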